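/- Let T : M → ℝ be a continuously differentiable function with timelike gradient, and let h : M → ℝ be continuously differentiable, nonnegative, and compactly supported. Then there exists ε₀ > 0 such that for every ε ∈ [0, ε₀), the function T − εh has timelike gradient; in particular T − εh is a time function, i.e. (T − εh)(p) < (T − εh)(q) whenever p ≼ q and p ≠ q. (The perturbation step in the paper's local timeslice-deformation Lemma.) -/

import Mathlib

open Set Metric

noncomputable section

/-- Spatial Euclidean factor. -/
abbrev E (n : ℕ) : Type := EuclideanSpace ℝ (Fin n)

/-- Minkowski spacetime `M = ℝ × E`. -/
abbrev M (n : ℕ) : Type := ℝ × E n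

variable {n : ℕ}

/-- Chronological relation `p ≪ q`. -/
def chron (p q : M n) : Prop := dist p.2 q.2 < q.1 - p.1

/-- Causal relation `p ≼ q`. -/
def causal (p q : M n) : Prop := dist p.2 q.2 ≤ q.1 - p.1

/-- Chronological future `I⁺(S)`. -/
def Iplus (S : Set (M n)) : Set (M n) := {q | ∃ p ∈ S, chron p q}

/-- Chronological past `I⁻(S)`. -/
def Iminus (S : Set (M n)) : Set (M n) := {q | ∃ p ∈ S, chron q p}

/-- `I(S) = I⁺(S) ∪ I⁻(S)`. -/
def Iboth (S : Set (M n)) : Set (M n) := Iplus S ∪ Iminus S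

/-- Causal future `J⁺(S)`. -/
def Jplus (S : Set (M n)) : Set (M n) := {q | ∃ p ∈ S, causal p q}

/-- Causal past `J⁻(S)`. -/
def Jminus (S : Set (M n)) : Set (M n) := {q | ∃ p ∈ S, causal q p}

/-- A set is achronal if no two of its points are chronologically related. -/
def Achronal (S : Set (M n)) : Prop := ∀ p ∈ S, ∀ q ∈ S, ¬ chron p q

/-- A set is acausal if no two distinct points of it are causally related. -/
def Acausal (S : Set (M n)) : Prop := ∀ p ∈ S, ∀ q ∈ S, p ≠ q → ¬ causal p q

/-- `edge(a)`: points `p ∈ closure a` such that every open neighborhood `O` of `p`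
contains `q, r` with `r ≪ p ≪ q` together with a continuous timelike curve in `O`
from `r` to `q` avoiding `a`. -/
def edge (a : Set (M n)) : Set (M n) :=
  {p | p ∈ closure a ∧ ∀ O : Set (M n), IsOpen O → p ∈ O →
    ∃ q ∈ O, ∃ r ∈ O, chron r p ∧ chron p q ∧
      ∃ γ : ℝ → M n, ContinuousOn γ (Icc 0 1) ∧ γ 0 = r ∧ γ 1 = q ∧
        (∀ s ∈ Icc (0:ℝ) 1, γ s ∈ O ∧ γ s ∉ a) ∧
        (∀ s ∈ Icc (0:ℝ) 1, ∀ t ∈ Icc (0:ℝ) 1, s < t → chron (γ s) (γ t))}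

/-- A slice: a closed achronal set with empty edge. -/
def IsSlice (Sg : Set (M n)) : Prop := IsClosed Sg ∧ Achronal Sg ∧ edge Sg = ∅

/-- A hypersurface in the slice `Sg`: a subset open in the subspace topology of `Sg`. -/
def IsHypersurfaceIn (Sg a : Set (M n)) : Prop :=
  a ⊆ Sg ∧ IsOpen ((Subtype.val : Sg → M n) ⁻¹' a)

/-- A hypersurface: subset of some slice, open in the slice's subspace topology. -/
def IsHypersurface (a : Set (M n)) : Prop := ∃ Sg, IsSlice Sg ∧ IsHypersurfaceIn Sg a

/-- The frontier (boundary) of `a` in the subspace topology of `Sg`,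
viewed as a subset of spacetime. -/
def frontierIn (Sg a : Set (M n)) : Set (M n) :=
  (Subtype.val : Sg → M n) '' frontier ((Subtype.val : Sg → M n) ⁻¹' a)

/-- A future-infinite causal worldline: the graph `{(t, x t) : t ≥ t₀}` of a
1-Lipschitz map defined on `[t₀, ∞)`. -/
def IsWorldline (W : Set (M n)) : Prop :=
  ∃ t₀ : ℝ, ∃ x : ℝ → E n, LipschitzOnWith 1 x (Ici t₀) ∧
    W = {p : M n | t₀ ≤ p.1 ∧ p.2 = x p.1}

/-- Domain of dependence `D(S)`: points through which every inextendible causal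
curve (graph of a 1-Lipschitz map `ℝ → E`) meets `S`. -/
def Dom (S : Set (M n)) : Set (M n) :=
  {p | ∀ x : ℝ → E n, LipschitzWith 1 x → x p.1 = p.2 → ∃ t : ℝ, (t, x t) ∈ S}

/-- Future domain of dependence `D⁺(S)`: every inextendible causal curve through `p`
meets `S` at some time `t ≤ p.1`. -/
def DomPlus (S : Set (M n)) : Set (M n) :=
  {p | ∀ x : ℝ → E n, LipschitzWith 1 x → x p.1 = p.2 →
    ∃ t : ℝ, t ≤ p.1 ∧ (t, x t) ∈ S}

/-- A `C¹` function has timelike gradient if at every point `∂T/∂t > ‖∇_E T‖`. -/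
def TimelikeGrad (T : M n → ℝ) : Prop :=
  ∀ p : M n,
    ‖(fderiv ℝ T p).comp (ContinuousLinearMap.inr ℝ ℝ (E n))‖ <
      fderiv ℝ T p ((1 : ℝ), (0 : E n))

/-- A past directed outward null deformation of the hypersurface `a` within the
open set `O`. -/
def IsPastOutwardNullDeformation (a O b : Set (M n)) : Prop :=
  IsHypersurface b ∧ Dom a ⊆ Dom b ∧ b ⊆ closure (Iminus a) ∧
  symmDiff a b ⊆ O ∧ edge b ⊆ edge a ∪ ((frontier (Iminus a) \ a) ∩ O)



section Helpers
variable {n : ℕ}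

lemma apply_decomp (A : M n →L[ℝ] ℝ) (v : M n) :
    A v = v.1 * A ((1:ℝ), (0 : E n)) + (A.comp (ContinuousLinearMap.inr ℝ ℝ (E n))) v.2 := by
  have : v = (v.1 • ((1:ℝ), (0:E n))) + ((0:ℝ), v.2) := by
    simp [Prod.ext_iff]
  rw [this, map_add, map_smul]
  simp [ContinuousLinearMap.comp_apply, smul_eq_mul]

lemma comp_inr_norm_le (A : M n →L[ℝ] ℝ) :
    ‖A.comp (ContinuousLinearMap.inr ℝ ℝ (E n))‖ ≤ ‖A‖ := by
  refine ContinuousLinearMap.opNorm_le_bound _ (norm_nonneg A) (fun x => ?_)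
  have h : ‖((0:ℝ), x)‖ = ‖x‖ := by simp [Prod.norm_def]
  calc ‖A ((0:ℝ), x)‖ ≤ ‖A‖ * ‖((0:ℝ),x)‖ := A.le_opNorm _
    _ = ‖A‖ * ‖x‖ := by rw [h]

lemma apply_one_zero_le (A : M n →L[ℝ] ℝ) : |A ((1:ℝ),(0:E n))| ≤ ‖A‖ := by
  have h1 := A.le_opNorm ((1:ℝ),(0:E n))
  have h : ‖((1:ℝ), (0:E n))‖ = 1 := by simp [Prod.norm_def]
  rw [h, mul_one] at h1
  simpa [Real.norm_eq_abs] using h1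

lemma timefun_of_tg (S : M n → ℝ) (hS : ContDiff ℝ 1 S) (hSg : TimelikeGrad S) :
    ∀ p q : M n, causal p q → p ≠ q → S p < S q := by
  intro p q hc hne
  have hΔt : 0 < q.1 - p.1 := by
    rcases lt_or_eq_of_le (le_trans dist_nonneg hc) with h | h
    · exact h
    · exfalso
      have h2 : dist p.2 q.2 = 0 := le_antisymm (h ▸ hc) dist_nonneg
      have : p.2 = q.2 := by rwa [dist_eq_zero] at h2
      exact hne (Prod.ext (by linarith [h.symm]) this)
  set v : M n := q - p with hv
  have hv1 : v.1 = q.1 - p.1 := rfl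
  have hv2 : ‖v.2‖ ≤ q.1 - p.1 := by
    have : ‖v.2‖ = dist p.2 q.2 := by
      rw [dist_eq_norm, ← norm_neg]; congr 1; simp [hv]
    rw [this]; exact hc
  set c : ℝ → M n := fun t => p + t • v with hcdef
  have hder : ∀ t : ℝ, HasDerivAt c v t := fun t => by
    have := ((hasDerivAt_id t).smul_const v).const_add p
    simp only [id_eq, one_smul] at this
    exact this
  set f : ℝ → ℝ := fun t => S (c t) with hfdef
  have hfd : ∀ t : ℝ, HasDerivAt f (fderiv ℝ S (c t) v) t := fun t =>
    ((hS.differentiable one_ne_zero (c t)).hasFDerivAt).comp_hasDerivAt t (hder t)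
  have hpos : ∀ t : ℝ, 0 < fderiv ℝ S (c t) v := by
    intro t
    set A := fderiv ℝ S (c t)
    have h1 := hSg (c t)
    have h2 := apply_decomp A v
    have h3 : ‖(A.comp (ContinuousLinearMap.inr ℝ ℝ (E n))) v.2‖ ≤
        ‖A.comp (ContinuousLinearMap.inr ℝ ℝ (E n))‖ * ‖v.2‖ :=
      ContinuousLinearMap.le_opNorm _ _
    have h4 : ‖A.comp (ContinuousLinearMap.inr ℝ ℝ (E n))‖ * ‖v.2‖ <
        A ((1:ℝ),(0:E n)) * (q.1 - p.1) := by
      calc ‖A.comp (ContinuousLinearMap.inr ℝ ℝ (E n))‖ * ‖v.2‖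
          ≤ ‖A.comp (ContinuousLinearMap.inr ℝ ℝ (E n))‖ * (q.1 - p.1) :=
            mul_le_mul_of_nonneg_left hv2 (norm_nonneg _)
        _ < A ((1:ℝ),(0:E n)) * (q.1 - p.1) := mul_lt_mul_of_pos_right h1 hΔt
    have h5 : -(A.comp (ContinuousLinearMap.inr ℝ ℝ (E n))) v.2 ≤
        ‖A.comp (ContinuousLinearMap.inr ℝ ℝ (E n))‖ * ‖v.2‖ := by
      calc -(A.comp (ContinuousLinearMap.inr ℝ ℝ (E n))) v.2 ≤
          ‖(A.comp (ContinuousLinearMap.inr ℝ ℝ (E n))) v.2‖ := by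
            rw [Real.norm_eq_abs]; exact neg_le_abs _
        _ ≤ _ := h3
    rw [h2, hv1]
    nlinarith
  have hmono : StrictMonoOn f (Icc 0 1) := by
    apply strictMonoOn_of_deriv_pos (convex_Icc 0 1)
    · exact fun t _ => ((hfd t).differentiableAt).continuousAt.continuousWithinAt
    · intro t _
      rw [(hfd t).deriv]; exact hpos t
  have h01 := hmono (left_mem_Icc.2 zero_le_one) (right_mem_Icc.2 zero_le_one) zero_lt_one
  have hf0 : f 0 = S p := by simp [hfdef, hcdef]
  have hf1 : f 1 = S q := by
    simp only [hfdef, hcdef, one_smul, hv]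
    congr 1; abel
  rwa [hf0, hf1] at h01

end Helpers

/-- Perturbing a `C¹` function `T` with timelike gradient by a small
multiple of a nonnegative compactly supported `C¹` bump keeps the gradient
timelike; in particular `T - εh` is a time function. -/
theorem stmt10 {n : ℕ} (hn : 0 < n) (T h : M n → ℝ)
    (hT : ContDiff ℝ 1 T) (hTg : TimelikeGrad T)
    (hh : ContDiff ℝ 1 h) (hpos : ∀ p, 0 ≤ h p) (hsupp : HasCompactSupport h) :
    ∃ ε₀ > (0 : ℝ), ∀ ε : ℝ, ε ∈ Ico (0 : ℝ) ε₀ →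
      TimelikeGrad (fun p => T p - ε * h p) ∧
      ∀ p q : M n, causal p q → p ≠ q → T p - ε * h p < T q - ε * h q := by
  have main : ∃ ε₀ > (0 : ℝ), ∀ ε : ℝ, ε ∈ Ico (0 : ℝ) ε₀ →
      TimelikeGrad (fun p => T p - ε * h p) := by
    set g : M n → ℝ := fun p =>
      fderiv ℝ T p ((1:ℝ),(0:E n)) - ‖(fderiv ℝ T p).comp (ContinuousLinearMap.inr ℝ ℝ (E n))‖
      with hg
    have hgpos : ∀ p, 0 < g p := fun p => sub_pos.2 (hTg p)
    have hfdT : Continuous (fderiv ℝ T) := (hT.fderiv_right (m := 0) le_rfl).continuous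
    have hgcont : Continuous g := by
      apply Continuous.sub
      · exact (ContinuousLinearMap.apply ℝ ℝ ((1:ℝ),(0:E n))).continuous.comp hfdT
      · apply Continuous.norm
        have : (fun p => (fderiv ℝ T p).comp (ContinuousLinearMap.inr ℝ ℝ (E n)))
            = (fun A : M n →L[ℝ] ℝ => A.comp (ContinuousLinearMap.inr ℝ ℝ (E n))) ∘ fderiv ℝ T :=
          rfl
        rw [this]
        refine Continuous.comp ?_ hfdT
        exact ((ContinuousLinearMap.compL ℝ (E n) (M n) ℝ).flip
          (ContinuousLinearMap.inr ℝ ℝ (E n))).continuous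
    obtain ⟨C, hC⟩ : ∃ C : ℝ, ∀ p, ‖fderiv ℝ h p‖ ≤ C := by
      obtain ⟨C, hC⟩ := Continuous.bounded_above_of_compact_support
        ((hh.fderiv_right (m := 0) le_rfl).continuous.norm) ((hsupp.fderiv (𝕜 := ℝ)).norm)
      exact ⟨C, fun p => by simpa using hC p⟩
    have hC0 : 0 ≤ C := le_trans (norm_nonneg _) (hC ⟨0, 0⟩)
    by_cases hK : (tsupport h).Nonempty
    · obtain ⟨p₀, hp₀, hmin⟩ := hsupp.exists_isMinOn hK hgcont.continuousOn
      set m := g p₀ with hm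
      have hm0 : 0 < m := hgpos p₀
      refine ⟨m / (2 * C + 1), div_pos hm0 (by linarith), ?_⟩
      intro ε ⟨hε0, hεlt⟩ p
      have hBz : p ∉ tsupport h → fderiv ℝ h p = 0 := by
        intro hp
        by_contra hne
        exact hp (support_fderiv_subset ℝ (Function.mem_support.2 hne))
      set A := fderiv ℝ T p
      set B := fderiv ℝ h p
      have hfd : fderiv ℝ (fun p => T p - ε * h p) p = A - ε • B := by
        have h1 : HasFDerivAt (fun p => T p - ε * h p) (A - ε • B) p := by
          exact
            ((hT.differentiable one_ne_zero p).hasFDerivAt.sub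
              (((hh.differentiable one_ne_zero p).hasFDerivAt.const_smul ε)))
        exact h1.fderiv
      rw [hfd]
      have key : 2 * ε * ‖B‖ < g p := by
        by_cases hp : p ∈ tsupport h
        · have h1 : ε * (2 * C + 1) < m := (lt_div_iff₀ (by linarith)).1 hεlt
          have h2 : m ≤ g p := hmin hp
          nlinarith [hC p, norm_nonneg B]
        · rw [hBz hp]; simpa using hgpos p
      have e1 : ‖(A - ε • B).comp (ContinuousLinearMap.inr ℝ ℝ (E n))‖ ≤
          ‖A.comp (ContinuousLinearMap.inr ℝ ℝ (E n))‖ + ε * ‖B‖ := by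
        have hc : (A - ε • B).comp (ContinuousLinearMap.inr ℝ ℝ (E n)) =
            A.comp (ContinuousLinearMap.inr ℝ ℝ (E n)) -
            ε • (B.comp (ContinuousLinearMap.inr ℝ ℝ (E n))) := by
          ext x; simp
        rw [hc]
        calc _ ≤ ‖A.comp (ContinuousLinearMap.inr ℝ ℝ (E n))‖ +
              ‖ε • (B.comp (ContinuousLinearMap.inr ℝ ℝ (E n)))‖ := norm_sub_le _ _
          _ ≤ _ := by
              have hns : ‖ε • (B.comp (ContinuousLinearMap.inr ℝ ℝ (E n)))‖
                  ≤ ε * ‖B.comp (ContinuousLinearMap.inr ℝ ℝ (E n))‖ := by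
                have := norm_smul_le ε (B.comp (ContinuousLinearMap.inr ℝ ℝ (E n)))
                simpa [abs_of_nonneg hε0] using this
              have := comp_inr_norm_le B
              nlinarith
      have e2 : A ((1:ℝ),(0:E n)) - ε * ‖B‖ ≤ (A - ε • B) ((1:ℝ),(0:E n)) := by
        have h3 : (A - ε • B) ((1:ℝ),(0:E n)) = A ((1:ℝ),(0:E n)) - ε * B ((1:ℝ),(0:E n)) := by
          simp [smul_eq_mul]
        rw [h3]
        have hb := apply_one_zero_le B
        have habs : ε * B ((1:ℝ),(0:E n)) ≤ ε * ‖B‖ :=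
          mul_le_mul_of_nonneg_left (le_trans (le_abs_self _) hb) hε0
        linarith
      calc ‖((A - ε • B)).comp (ContinuousLinearMap.inr ℝ ℝ (E n))‖
          ≤ ‖A.comp (ContinuousLinearMap.inr ℝ ℝ (E n))‖ + ε * ‖B‖ := e1
        _ < A ((1:ℝ),(0:E n)) - ε * ‖B‖ := by
            have hkey2 : 2 * ε * ‖B‖ <
                A ((1:ℝ),(0:E n)) - ‖A.comp (ContinuousLinearMap.inr ℝ ℝ (E n))‖ := key
            linarith
        _ ≤ (A - ε • B) ((1:ℝ),(0:E n)) := e2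
    · have hh0 : ∀ p, h p = 0 := by
        intro p
        by_contra hne
        exact hK ⟨p, subset_tsupport h (Function.mem_support.2 hne)⟩
      refine ⟨1, one_pos, fun ε _ p => ?_⟩
      have heq : (fun p => T p - ε * h p) = T := by funext p; rw [hh0]; ring
      rw [heq]; exact hTg p
  obtain ⟨ε₀, hε₀, hmain⟩ := main
  refine ⟨ε₀, hε₀, fun ε hε => ?_⟩
  have tg := hmain ε hε
  exact ⟨tg, timefun_of_tg _ (hT.sub (contDiff_const.mul hh)) tg⟩

end
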